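/- On ℝ⁴ with Darboux coordinates (q¹, q², p₁, p₂) and canonical symplectic structure, the two constraint functions φ₁ = p₂ + A e^{(2/3)q¹}(q²)^{-5/3} and φ₂ = p₁ − A e^{(2/3)q¹}(q²)^{-2/3} (for a constant A > 0, on the region q² > 0) have vanishing Poisson bracket: {φ₁, φ₂} = 0 identically. -/

import Mathlib

/-- Ideal-gas constraint `φ₁ = p₂ + A e^{(2/3)q¹}(q²)^{-5/3}`. -/
noncomputable def phi1 (A q1 q2 p1 p2 : ℝ) : ℝ :=
  p2 + A * Real.exp (2 / 3 * q1) * q2 ^ ((-5 : ℝ) / 3)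

/-- Ideal-gas constraint `φ₂ = p₁ − A e^{(2/3)q¹}(q²)^{-2/3}`. -/
noncomputable def phi2 (A q1 q2 p1 p2 : ℝ) : ℝ :=
  p1 - A * Real.exp (2 / 3 * q1) * q2 ^ ((-2 : ℝ) / 3)

/-- The canonical Poisson bracket `{φ₁, φ₂}` vanishes identically on the region `q² > 0`. -/
theorem stmt3 (A : ℝ) (hA : 0 < A) (q1 q2 p1 p2 : ℝ) (hq2 : 0 < q2) :
    (deriv (fun x => phi1 A x q2 p1 p2) q1) * (deriv (fun y => phi2 A q1 q2 y p2) p1)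
  - (deriv (fun x => phi2 A x q2 p1 p2) q1) * (deriv (fun y => phi1 A q1 q2 y p2) p1)
  + (deriv (fun x => phi1 A q1 x p1 p2) q2) * (deriv (fun y => phi2 A q1 q2 p1 y) p2)
  - (deriv (fun x => phi2 A q1 x p1 p2) q2) * (deriv (fun y => phi1 A q1 q2 p1 y) p2)
    = 0 := by
  have hq2' : q2 ≠ 0 := ne_of_gt hq2
  have hexp : HasDerivAt (fun x : ℝ => Real.exp (2 / 3 * x))
      (Real.exp (2 / 3 * q1) * (2 / 3)) q1 := by
    simpa using (((hasDerivAt_id q1).const_mul (2 / 3 : ℝ)).exp)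
  -- ∂φ₁/∂q1
  have h1 : deriv (fun x => phi1 A x q2 p1 p2) q1
      = A * (Real.exp (2 / 3 * q1) * (2 / 3)) * q2 ^ ((-5 : ℝ) / 3) := by
    have : HasDerivAt (fun x => phi1 A x q2 p1 p2)
        (A * (Real.exp (2 / 3 * q1) * (2 / 3)) * q2 ^ ((-5 : ℝ) / 3)) q1 :=
      (((hexp.const_mul A).mul_const _).const_add p2)
    exact this.deriv
  -- ∂φ₂/∂q1
  have h2 : deriv (fun x => phi2 A x q2 p1 p2) q1
      = -(A * (Real.exp (2 / 3 * q1) * (2 / 3)) * q2 ^ ((-2 : ℝ) / 3)) := by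
    have : HasDerivAt (fun x => phi2 A x q2 p1 p2)
        (0 - A * (Real.exp (2 / 3 * q1) * (2 / 3)) * q2 ^ ((-2 : ℝ) / 3)) q1 :=
      (hasDerivAt_const q1 p1).sub ((hexp.const_mul A).mul_const _)
    simpa using this.deriv
  -- ∂φ₁/∂q2
  have hrpow5 : HasDerivAt (fun x : ℝ => x ^ ((-5 : ℝ) / 3))
      (((-5 : ℝ) / 3) * q2 ^ ((-5 : ℝ) / 3 - 1)) q2 :=
    Real.hasDerivAt_rpow_const (Or.inl hq2')
  have h3 : deriv (fun x => phi1 A q1 x p1 p2) q2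
      = A * Real.exp (2 / 3 * q1) * (((-5 : ℝ) / 3) * q2 ^ ((-5 : ℝ) / 3 - 1)) := by
    have : HasDerivAt (fun x => phi1 A q1 x p1 p2)
        (A * Real.exp (2 / 3 * q1) * (((-5 : ℝ) / 3) * q2 ^ ((-5 : ℝ) / 3 - 1))) q2 :=
      (hrpow5.const_mul _).const_add p2
    exact this.deriv
  -- ∂φ₂/∂q2
  have hrpow2 : HasDerivAt (fun x : ℝ => x ^ ((-2 : ℝ) / 3))
      (((-2 : ℝ) / 3) * q2 ^ ((-2 : ℝ) / 3 - 1)) q2 :=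
    Real.hasDerivAt_rpow_const (Or.inl hq2')
  have h4 : deriv (fun x => phi2 A q1 x p1 p2) q2
      = -(A * Real.exp (2 / 3 * q1) * (((-2 : ℝ) / 3) * q2 ^ ((-2 : ℝ) / 3 - 1))) := by
    have : HasDerivAt (fun x => phi2 A q1 x p1 p2)
        (0 - A * Real.exp (2 / 3 * q1) * (((-2 : ℝ) / 3) * q2 ^ ((-2 : ℝ) / 3 - 1))) q2 :=
      (hasDerivAt_const q2 p1).sub (hrpow2.const_mul _)
    simpa using this.deriv
  -- ∂φ₂/∂p1 = 1
  have h5 : deriv (fun y => phi2 A q1 q2 y p2) p1 = 1 := by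
    have : HasDerivAt (fun y => phi2 A q1 q2 y p2) 1 p1 := by
      exact (hasDerivAt_id p1).sub_const (A * Real.exp (2 / 3 * q1) * q2 ^ ((-2 : ℝ) / 3))
    exact this.deriv
  -- ∂φ₁/∂p1 = 0
  have h6 : deriv (fun y => phi1 A q1 q2 y p2) p1 = 0 := by
    simp [phi1]
  -- ∂φ₂/∂p2 = 0
  have h7 : deriv (fun y => phi2 A q1 q2 p1 y) p2 = 0 := by
    simp [phi2]
  -- ∂φ₁/∂p2 = 1
  have h8 : deriv (fun y => phi1 A q1 q2 p1 y) p2 = 1 := by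
    have : HasDerivAt (fun y => phi1 A q1 q2 p1 y) 1 p2 := by
      exact (hasDerivAt_id p2).add_const (A * Real.exp (2 / 3 * q1) * q2 ^ ((-5 : ℝ) / 3))
    exact this.deriv
  rw [h1, h2, h3, h4, h5, h6, h7, h8]
  have e1 : ((-2 : ℝ) / 3 - 1) = (-5 : ℝ) / 3 := by norm_num
  have e2 : ((-5 : ℝ) / 3 - 1) = (-8 : ℝ) / 3 := by norm_num
  rw [e1, e2]
  ring
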